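/- The formal power series M satisfying M - 1 = x*M^3 with M(0)=1 has coefficients [x^n]M = (1/(2n+1))*binomial(3n,n) for n >= 1. -/

import Mathlib

open PowerSeries

private lemma fact3 (n : ℕ) : (3*n+3).factorial = (3*n+3)*((3*n+2)*((3*n+1)*(3*n).factorial)) := by
  rw [show 3*n+3 = (3*n+2)+1 by ring, Nat.factorial_succ,
      show 3*n+2 = (3*n+1)+1 by ring, Nat.factorial_succ,
      show 3*n+1 = (3*n)+1 by ring, Nat.factorial_succ]

private lemma fact2 (n : ℕ) : (2*n+2).factorial = (2*n+2)*((2*n+1)*(2*n).factorial) := by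
  rw [show 2*n+2 = (2*n+1)+1 by ring, Nat.factorial_succ,
      show 2*n+1 = (2*n)+1 by ring, Nat.factorial_succ]

private lemma choose_key (n : ℕ) :
    2*((n:ℚ)+1)*(2*(n:ℚ)+1) * (((3*n+3).choose (n+1) : ℕ) : ℚ)
      = 3*(3*(n:ℚ)+1)*(3*(n:ℚ)+2) * (((3*n).choose n : ℕ) : ℚ) := by
  have h1 : n + 1 ≤ 3*n+3 := by omega
  have h2 : n ≤ 3*n := by omega
  rw [Nat.cast_choose ℚ h1, Nat.cast_choose ℚ h2,
      show 3*n+3 - (n+1) = 2*n+2 by omega, show 3*n - n = 2*n by omega]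
  have e3 := fact3 n
  have e2 := fact2 n
  have e1 : (n+1).factorial = (n+1) * n.factorial := Nat.factorial_succ n
  have q3 : ((3*n+3).factorial : ℚ) = (3*n+3)*((3*n+2)*((3*n+1)*((3*n).factorial : ℚ))) := by
    rw [e3]; push_cast; ring
  have q2 : ((2*n+2).factorial : ℚ) = (2*n+2)*((2*n+1)*((2*n).factorial : ℚ)) := by
    rw [e2]; push_cast; ring
  have q1 : ((n+1).factorial : ℚ) = (n+1)*(n.factorial : ℚ) := by
    rw [e1]; push_cast; ring
  rw [q3, q2, q1]
  have nz1 : (n.factorial : ℚ) ≠ 0 := by exact_mod_cast n.factorial_pos.ne'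
  have nz2 : ((2*n).factorial : ℚ) ≠ 0 := by exact_mod_cast (2*n).factorial_pos.ne'
  have nzn : ((n:ℚ)+1) ≠ 0 := by positivity
  have nza : (2*(n:ℚ)+1) ≠ 0 := by positivity
  have nzb : (2*(n:ℚ)+2) ≠ 0 := by positivity
  field_simp

/-- the formal power series `M` with `M(0) = 1` satisfying
`M - 1 = x M³` has coefficients `[xⁿ]M = (1/(2n+1)) * binom(3n, n)` for `n ≥ 1`. -/
theorem coeff_of_cubic_functional_equation (M : PowerSeries ℚ)
    (h0 : PowerSeries.constantCoeff M = 1)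
    (h : M - 1 = PowerSeries.X * M ^ 3) :
    ∀ n : ℕ, 1 ≤ n →
      PowerSeries.coeff n M = (1 / (2 * n + 1)) * ((3 * n).choose n : ℚ) := by
  have hX : X * M^3 = M - 1 := h.symm
  -- derivative of M^2 and M^3
  have hM2 : d⁄dX ℚ (M^2) = 2 * M * d⁄dX ℚ M := by
    rw [Derivation.leibniz_pow]
    simp [smul_eq_mul]
    ring
  have hM3 : d⁄dX ℚ (M^3) = 3 * M^2 * d⁄dX ℚ M := by
    rw [Derivation.leibniz_pow]
    simp [smul_eq_mul]
    ring
  -- differentiate the functional equation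
  have hd : d⁄dX ℚ M = M^3 + X * (3 * M^2 * d⁄dX ℚ M) := by
    have := congrArg (d⁄dX ℚ) h
    rw [map_sub, Derivation.map_one_eq_zero, sub_zero, Derivation.leibniz, derivative_X,
        smul_eq_mul, smul_eq_mul, hM3] at this
    linear_combination this
  set u := X * d⁄dX ℚ M with hu
  have hMu : M * u = (M - 1) * M + 3 * ((M - 1) * u) := by
    calc M * u = (X * M) * d⁄dX ℚ M := by rw [hu]; ring
      _ = (X * M) * (M^3 + X * (3 * M^2 * d⁄dX ℚ M)) := by rw [← hd]
      _ = (X * M^3) * M + 3 * ((X * M^3) * (X * d⁄dX ℚ M)) := by ring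
      _ = (M - 1) * M + 3 * ((M - 1) * u) := by rw [hX, ← hu]
  have eqA : 3 * u - 2 * (M * u) = M^2 - M := by linear_combination hMu
  have eqB : 3 * (M * u) - 2 * (M^2 * u) = M^3 - M^2 := by linear_combination M * eqA
  have hu2 : 2 * (M * u) = X * d⁄dX ℚ (M^2) := by rw [hu, hM2]; ring
  have hu3 : 3 * (M^2 * u) = X * d⁄dX ℚ (M^3) := by rw [hu, hM3]; ring
  -- coefficient extraction lemma
  have cXD : ∀ (f : PowerSeries ℚ) (n : ℕ), coeff n (X * d⁄dX ℚ f) = n * coeff n f := by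
    intro f n
    cases n with
    | zero => simp
    | succ n => rw [coeff_succ_X_mul, coeff_derivative]; push_cast; ring
  -- rewrite numerals as C
  have e3 : ((3 : ℚ⟦X⟧)) = C 3 := (map_ofNat C 3).symm
  have e9 : ((9 : ℚ⟦X⟧)) = C 9 := (map_ofNat C 9).symm
  have e4 : ((4 : ℚ⟦X⟧)) = C 4 := (map_ofNat C 4).symm
  have e6 : ((6 : ℚ⟦X⟧)) = C 6 := (map_ofNat C 6).symm
  have eqA' : C 3 * u - X * d⁄dX ℚ (M^2) = M^2 - M := by
    rw [← e3]; linear_combination eqA + hu2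
  have eqB' : C 9 * (X * d⁄dX ℚ (M^2)) - C 4 * (X * d⁄dX ℚ (M^3))
      = C 6 * M^3 - C 6 * M^2 := by
    rw [← e9, ← e4, ← e6]; linear_combination 6 * eqB - 9 * hu2 + 4 * hu3
  have hb : ∀ n : ℕ, (3*(n:ℚ)+1) * coeff n M = ((n:ℚ)+1) * coeff n (M^2) := by
    intro n
    have t := congrArg (coeff n) eqA'
    rw [map_sub, map_sub, coeff_C_mul, cXD M n, cXD (M^2) n] at t
    linarith
  have hc : ∀ n : ℕ, 3*(3*(n:ℚ)+2) * coeff n (M^2) = 2*(2*(n:ℚ)+3) * coeff n (M^3) := by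
    intro n
    have t := congrArg (coeff n) eqB'
    rw [map_sub, map_sub, coeff_C_mul, coeff_C_mul, coeff_C_mul, coeff_C_mul,
        cXD (M^2) n, cXD (M^3) n] at t
    linarith
  have ha : ∀ n : ℕ, coeff (n+1) M = coeff n (M^3) := by
    intro n
    have t := congrArg (coeff (n+1)) h
    rw [map_sub, coeff_succ_X_mul] at t
    simpa using t
  intro n hn
  induction n, hn using Nat.le_induction with
  | base =>
    have : coeff 1 M = coeff 0 (M^3) := ha 0
    rw [this, coeff_zero_eq_constantCoeff, map_pow, h0]
    norm_num
  | succ n hn ih =>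
    have hbn := hb n
    have hcn := hc n
    have han := ha n
    have key := choose_key n
    have nzn : ((n:ℚ)+1) ≠ 0 := by positivity
    have nza : (2*(n:ℚ)+1) ≠ 0 := by positivity
    have nzb : (2*(n:ℚ)+3) ≠ 0 := by positivity
    have hb' : coeff n (M^2) = (3*(n:ℚ)+1)/((n:ℚ)+1) * coeff n M := by
      field_simp
      linarith
    have hc' : coeff n (M^3) = (3*(3*(n:ℚ)+2))/(2*(2*(n:ℚ)+3)) * coeff n (M^2) := by
      field_simp
      linarith
    rw [show 3*(n+1) = 3*n+3 by ring, han, hc', hb', ih]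
    push_cast
    field_simp
    linear_combination (-(2*(n:ℚ)+3)) * key
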